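/- arXiv:2605.08896 — 2 statements merged into one kernel-verified Lean document; each statement's English description precedes it below -/
import Mathlib

section
/- Let K ≥ 2, let s : {1,…,K} → ℝ, let j ∈ {1,…,K}, let γ ≥ 0, κ > 0, and let η ∈ (0,1] be such that g_{γ,κ}(Δ_s(j)) ≥ η whenever Δ_s(j) ≤ γ. Then the indicator of margin failure is pointwise dominated: 1{Δ_s(j) ≤ γ} ≤ η^{−1} (1 + e^{γ}) · g_{γ,κ}(Δ_s(j)) · (1 − p_s(j)). Moreover, for the logistic gate one may always take η = 1/2, since Δ ≤ γ implies σ((γ − Δ)/κ) ≥ 1/2. -/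
/-- Option margin: `Δ_s(y) = s(y) - max_{k ≠ y} s(k)`. -/
noncomputable def optionMargin {K : ℕ} (s : Fin K → ℝ) (y : Fin K) : ℝ :=
  s y - ⨆ k : {k : Fin K // k ≠ y}, s k.1

/-- Softmax probability `p_s(j) = exp(s j) / Σ_k exp(s k)`. -/
noncomputable def softmaxProb {K : ℕ} (s : Fin K → ℝ) (j : Fin K) : ℝ :=
  Real.exp (s j) / ∑ k : Fin K, Real.exp (s k)

/-- Logistic sigmoid `σ(t) = 1/(1+e^{-t})`. -/
noncomputable def logisticSigmoid (t : ℝ) : ℝ := 1 / (1 + Real.exp (-t))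

/-- Margin gate `g_{γ,κ}(Δ) = σ((γ - Δ)/κ)`. -/
noncomputable def gate (γ κ Δ : ℝ) : ℝ := logisticSigmoid ((γ - Δ) / κ)

lemma gate_half {γ κ : ℝ} (hκ : 0 < κ) {Δ : ℝ} (h : Δ ≤ γ) : (1 : ℝ) / 2 ≤ gate γ κ Δ := by
  unfold gate logisticSigmoid
  have ht : 0 ≤ (γ - Δ) / κ := div_nonneg (by linarith) hκ.le
  have he : Real.exp (-((γ - Δ) / κ)) ≤ 1 := Real.exp_le_one_iff.mpr (by linarith)
  have hpos : 0 < 1 + Real.exp (-((γ - Δ) / κ)) := by positivity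
  exact one_div_le_one_div_of_le hpos (by linarith)

lemma gate_pos (γ κ Δ : ℝ) : 0 < gate γ κ Δ := by
  unfold gate logisticSigmoid
  positivity

/-- The indicator of margin failure `1{Δ_s(j) ≤ γ}` is pointwise dominated by
`η⁻¹ (1+e^γ) · g_{γ,κ}(Δ_s(j)) · (1 - p_s(j))` whenever the gate is at least `η` on the
failure region; moreover the logistic gate always admits `η = 1/2`. -/
theorem indicator_dominated_by_gated_mass {K : ℕ} (hK : 2 ≤ K) (s : Fin K → ℝ)
    (j : Fin K) (γ κ η : ℝ) (hγ : 0 ≤ γ) (hκ : 0 < κ) (hη0 : 0 < η) (hη1 : η ≤ 1)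
    (hgate : optionMargin s j ≤ γ → η ≤ gate γ κ (optionMargin s j)) :
    (if optionMargin s j ≤ γ then (1 : ℝ) else 0) ≤
      η⁻¹ * (1 + Real.exp γ) * (gate γ κ (optionMargin s j) * (1 - softmaxProb s j)) ∧
    ∀ Δ : ℝ, Δ ≤ γ → (1 : ℝ) / 2 ≤ gate γ κ Δ := by
  refine ⟨?_, fun Δ h => gate_half hκ h⟩
  have hS : 0 < ∑ k : Fin K, Real.exp (s k) := by
    apply Finset.sum_pos (fun k _ => Real.exp_pos _)
    exact ⟨j, Finset.mem_univ j⟩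
  have hp1 : softmaxProb s j ≤ 1 := by
    unfold softmaxProb
    rw [div_le_one hS]
    exact Finset.single_le_sum (fun k _ => (Real.exp_pos (s k)).le) (Finset.mem_univ j)
  by_cases hΔ : optionMargin s j ≤ γ
  · rw [if_pos hΔ]
    haveI : Nontrivial (Fin K) := Fin.nontrivial_iff_two_le.mpr hK
    haveI : Nonempty {k : Fin K // k ≠ j} := by
      obtain ⟨k, hk⟩ := exists_ne j; exact ⟨⟨k, hk⟩⟩
    -- maximizer over k ≠ j
    obtain ⟨k₀, hk₀⟩ := Finite.exists_max (fun k : {k : Fin K // k ≠ j} => s k.1)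
    have hM : (⨆ k : {k : Fin K // k ≠ j}, s k.1) ≤ s k₀.1 := ciSup_le hk₀
    have hsj : s j ≤ s k₀.1 + γ := by
      have := hΔ; unfold optionMargin at this; linarith
    set A := Real.exp (s j) with hA
    set B := (∑ k : Fin K, Real.exp (s k)) - A with hB
    have hBsum : (∑ k : Fin K, Real.exp (s k)) = A + ∑ k ∈ Finset.univ.erase j, Real.exp (s k) := by
      rw [hA]
      exact (Finset.add_sum_erase _ (fun k => Real.exp (s k)) (Finset.mem_univ j)).symm
    have hBge : Real.exp (s k₀.1) ≤ B := by
      rw [hB, hBsum]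
      have : Real.exp (s k₀.1) ≤ ∑ k ∈ Finset.univ.erase j, Real.exp (s k) :=
        Finset.single_le_sum (fun k _ => (Real.exp_pos (s k)).le)
          (Finset.mem_erase.mpr ⟨k₀.2, Finset.mem_univ _⟩)
      linarith
    have hAB : A ≤ B * Real.exp γ := by
      calc A = Real.exp (s j) := hA
        _ ≤ Real.exp (s k₀.1 + γ) := Real.exp_le_exp.mpr hsj
        _ = Real.exp (s k₀.1) * Real.exp γ := Real.exp_add _ _
        _ ≤ B * Real.exp γ := by
            exact mul_le_mul_of_nonneg_right hBge (Real.exp_pos γ).le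
    have hBpos : 0 < B := lt_of_lt_of_le (Real.exp_pos _) hBge
    -- 1 ≤ (1+e^γ)(1 - p)
    have h1p : (1 : ℝ) ≤ (1 + Real.exp γ) * (1 - softmaxProb s j) := by
      have hps : 1 - softmaxProb s j = B / (A + B) := by
        unfold softmaxProb
        rw [← hA]
        have : (∑ k : Fin K, Real.exp (s k)) = A + B := by rw [hB]; ring
        rw [this]
        rw [one_sub_div (ne_of_gt (by linarith [Real.exp_pos (s j)] : (0:ℝ) < A + B))]
        congr 1; ring
      have hApos : 0 < A := Real.exp_pos (s j)
      have hABpos : 0 < A + B := by linarith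
      rw [hps, ← mul_div_assoc, le_div_iff₀ hABpos]
      nlinarith
    have hg := hgate hΔ
    have hgpos := gate_pos γ κ (optionMargin s j)
    have h1 : 0 ≤ 1 - softmaxProb s j := by linarith
    have hinv : η⁻¹ * η = 1 := inv_mul_cancel₀ hη0.ne'
    have hexp := Real.exp_pos γ
    have key : η ≤ (1 + Real.exp γ) * (gate γ κ (optionMargin s j) * (1 - softmaxProb s j)) := by
      nlinarith [mul_le_mul_of_nonneg_left (mul_le_mul_of_nonneg_right hg h1)
          (by linarith : (0:ℝ) ≤ 1 + Real.exp γ),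
        mul_le_mul_of_nonneg_left h1p hη0.le]
    calc (1:ℝ) = η⁻¹ * η := hinv.symm
      _ ≤ η⁻¹ * ((1 + Real.exp γ) * (gate γ κ (optionMargin s j) * (1 - softmaxProb s j))) :=
          mul_le_mul_of_nonneg_left key (inv_nonneg.mpr hη0.le)
      _ = η⁻¹ * (1 + Real.exp γ) * (gate γ κ (optionMargin s j) * (1 - softmaxProb s j)) := by
          ring
  · rw [if_neg hΔ]
    have := gate_pos γ κ (optionMargin s j)
    have : 0 ≤ gate γ κ (optionMargin s j) * (1 - softmaxProb s j) := by
      apply mul_nonneg (gate_pos γ κ _).le; linarith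
    have hexp := (Real.exp_pos γ).le
    positivity
end

section
/- Let W = ℝ^{d} and let Q be a probability measure on W with finite mean μ := E_{w∼Q}[w]. Fix γ ≥ 0 and ρ ∈ [0,1], and assume the posterior logit-stability condition: Q({w : sup_{x∈X} max_{k∈{1,…,K}} |s_w(x,k) − s_μ(x,k)| ≤ γ/2}) ≥ 1 − ρ. Then the deterministic worst-class risk of the mean model satisfies WCR^{det}(μ;D') ≤ R_{mf,γ}(Q;D') + ρ. -/
open MeasureTheory

/-- Posterior margin-failure risk
`R_{mf,γ}(Q;D') = max_j E_{x∼D'_j}[Q({w : Δ_w(x,j) ≤ γ})]`. -/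
noncomputable def Rmf {X W : Type*} [MeasurableSpace X] [MeasurableSpace W] {K : ℕ}
    (D : Fin K → Measure X) (s : W → X → Fin K → ℝ) (γ : ℝ) (Q : Measure W) : ℝ :=
  ⨆ j : Fin K, ∫ x, (Q {w | optionMargin (s w x) j ≤ γ}).toReal ∂(D j)

/-- Deterministic worst-class risk of the model with coordinates `μ`:
`WCR^{det}(μ;D') = max_j D'_j({x : Δ_μ(x,j) ≤ 0})`. -/
noncomputable def WCRdet {X W : Type*} [MeasurableSpace X] {K : ℕ}
    (D : Fin K → Measure X) (s : W → X → Fin K → ℝ) (μ : W) : ℝ :=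
  ⨆ j : Fin K, ((D j) {x | optionMargin (s μ x) j ≤ 0}).toReal

/-- Risk-level Gibbs-to-deterministic bridge under posterior logit stability:
if `Q`-most samples `w` have all scores within `γ/2` of the mean model `μ = E_Q[w]`,
then `WCR^{det}(μ;D') ≤ R_{mf,γ}(Q;D') + ρ`. -/
theorem deterministic_bridge {X : Type*} [MeasurableSpace X] {K d : ℕ} (hK : 2 ≤ K)
    (D : Fin K → Measure X) (hD : ∀ j, IsProbabilityMeasure (D j))
    (s : (Fin d → ℝ) → X → Fin K → ℝ)
    (hs : ∀ k : Fin K, Measurable fun p : (Fin d → ℝ) × X => s p.1 p.2 k)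
    (γ ρ : ℝ) (hγ : 0 ≤ γ) (hρ0 : 0 ≤ ρ) (hρ1 : ρ ≤ 1)
    (Q : Measure (Fin d → ℝ)) (hQ : IsProbabilityMeasure Q)
    (hint : Integrable (fun w => w) Q)
    (μmean : Fin d → ℝ) (hμ : μmean = ∫ w, w ∂Q)
    (hstab : 1 - ρ ≤
      (Q {w | ∀ (x : X) (k : Fin K), |s w x k - s μmean x k| ≤ γ / 2}).toReal) :
    WCRdet D s μmean ≤ Rmf D s γ Q + ρ := by
  haveI : Nonempty (Fin K) := ⟨⟨0, by omega⟩⟩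
  set S := {w | ∀ (x : X) (k : Fin K), |s w x k - s μmean x k| ≤ γ / 2} with hS
  have hne : ∀ j : Fin K, Nonempty {k : Fin K // k ≠ j} := by
    intro j
    obtain ⟨k, hk⟩ := Fintype.exists_ne_of_one_lt_card (by simp; omega) j
    exact ⟨⟨k, hk⟩⟩
  have hmeas : ∀ j : Fin K,
      Measurable fun p : (Fin d → ℝ) × X => optionMargin (s p.1 p.2) j := by
    intro j
    haveI := hne j
    have heq : (fun p : (Fin d → ℝ) × X => optionMargin (s p.1 p.2) j)
        = fun p => s p.1 p.2 j -
          Finset.univ.sup' Finset.univ_nonempty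
            (fun k : {k : Fin K // k ≠ j} => s p.1 p.2 k.1) := by
      funext p
      rw [optionMargin, Finset.sup'_univ_eq_ciSup]
    rw [heq]
    have hsup : Measurable fun p : (Fin d → ℝ) × X =>
        Finset.univ.sup' Finset.univ_nonempty
          (fun k : {k : Fin K // k ≠ j} => s p.1 p.2 k.1) := by
      have := Finset.measurable_sup'
        (f := fun (k : {k : Fin K // k ≠ j}) (p : (Fin d → ℝ) × X) => s p.1 p.2 k.1)
        Finset.univ_nonempty (fun n _ => hs n.1)
      have heq2 : (Finset.univ.sup' Finset.univ_nonempty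
          (fun (k : {k : Fin K // k ≠ j}) (p : (Fin d → ℝ) × X) => s p.1 p.2 k.1))
          = fun p => Finset.univ.sup' Finset.univ_nonempty
            (fun k : {k : Fin K // k ≠ j} => s p.1 p.2 k.1) := by
        funext p; rw [Finset.sup'_apply]
      rw [heq2] at this; exact this
    exact (hs j).sub hsup
  rw [WCRdet]
  apply ciSup_le
  intro j
  set B := {x | optionMargin (s μmean x) j ≤ 0} with hB
  have hBmeas : MeasurableSet B := by
    have : Measurable fun x : X => optionMargin (s μmean x) j :=
      (hmeas j).comp (measurable_prodMk_left)
    exact this measurableSet_Iic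
  set f := fun x : X => (Q {w | optionMargin (s w x) j ≤ γ}).toReal with hf
  have hfmeas : Measurable f := by
    have hA : MeasurableSet {p : (Fin d → ℝ) × X | optionMargin (s p.1 p.2) j ≤ γ} :=
      (hmeas j) measurableSet_Iic
    exact (measurable_measure_prodMk_right hA).ennreal_toReal
  have hf01 : ∀ x, 0 ≤ f x ∧ f x ≤ 1 := by
    intro x
    refine ⟨ENNReal.toReal_nonneg, ?_⟩
    have : Q {w | optionMargin (s w x) j ≤ γ} ≤ 1 := prob_le_one
    simpa using ENNReal.toReal_mono (by simp) this
  have hfint : Integrable f (D j) := by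
    refine Integrable.mono' (integrable_const 1) hfmeas.aestronglyMeasurable
      (Filter.Eventually.of_forall fun x => ?_)
    rw [Real.norm_eq_abs, abs_of_nonneg (hf01 x).1]
    exact (hf01 x).2
  -- pointwise bound
  have hpt : ∀ x, Set.indicator B (fun _ => (1 : ℝ)) x ≤ f x + ρ := by
    intro x
    by_cases hx : x ∈ B
    · rw [Set.indicator_of_mem hx]
      -- on B, S ⊆ {w | margin ≤ γ}
      have hsub : S ⊆ {w | optionMargin (s w x) j ≤ γ} := by
        intro w hw
        haveI := hne j
        have hbdd : ∀ v : Fin d → ℝ,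
            BddAbove (Set.range fun k : {k : Fin K // k ≠ j} => s v x k.1) :=
          fun v => (Set.finite_range _).bddAbove
        have h1 : s w x j ≤ s μmean x j + γ / 2 := by
          have := (hw x j)
          rw [abs_le] at this; linarith [this.2]
        have h2 : (⨆ k : {k : Fin K // k ≠ j}, s μmean x k.1)
            ≤ (⨆ k : {k : Fin K // k ≠ j}, s w x k.1) + γ / 2 := by
          apply ciSup_le
          intro k
          have habs := hw x k.1
          rw [abs_le] at habs
          have hle : s w x k.1 ≤ ⨆ k : {k : Fin K // k ≠ j}, s w x k.1 :=
            le_ciSup (hbdd w) k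
          linarith [habs.1]
        have hxB : optionMargin (s μmean x) j ≤ 0 := hx
        simp only [Set.mem_setOf_eq, optionMargin] at hxB ⊢
        linarith
      have hQle : 1 - ρ ≤ f x := by
        refine le_trans hstab ?_
        exact ENNReal.toReal_mono (by simp) (measure_mono hsub)
      linarith
    · rw [Set.indicator_of_notMem hx]
      have := (hf01 x).1
      linarith
  -- integrate
  haveI := hD j
  have hind : ((D j) B).toReal = ∫ x, Set.indicator B (fun _ => (1 : ℝ)) x ∂(D j) := by
    rw [integral_indicator_const _ hBmeas]
    simp
    rfl
  have hmono : ∫ x, Set.indicator B (fun _ => (1 : ℝ)) x ∂(D j)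
      ≤ ∫ x, (f x + ρ) ∂(D j) := by
    refine integral_mono ((integrable_const (1 : ℝ)).indicator hBmeas)
      (hfint.add (integrable_const ρ)) hpt
  have hsum : ∫ x, (f x + ρ) ∂(D j) = (∫ x, f x ∂(D j)) + ρ := by
    rw [integral_add hfint (integrable_const ρ), integral_const]
    simp
  have hRmf : ∫ x, f x ∂(D j) ≤ Rmf D s γ Q := by
    rw [Rmf]
    exact le_ciSup (f := fun j : Fin K =>
      ∫ x, (Q {w | optionMargin (s w x) j ≤ γ}).toReal ∂(D j))
      (Set.Finite.bddAbove (Set.finite_range _)) j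
  calc ((D j) B).toReal ≤ (∫ x, f x ∂(D j)) + ρ := by rw [hind]; rw [hsum] at hmono; exact hmono
    _ ≤ Rmf D s γ Q + ρ := by linarith
end
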